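/- For integers n ≥ 1 and 1 ≤ k ≤ n − 1, the number of weakly increasing sequences 1 ≤ t₁ ≤ t₂ ≤ ... ≤ t_k ≤ n − 1 satisfying t_j ≥ j for all j equals ((n − k)/n) · C(n + k − 1, k). -/

import Mathlib

open Finset

private def tabSet (n k : ℕ) : Finset (Fin k → ℕ) :=
  (Fintype.piFinset fun _ => Finset.range n).filter
    fun t => Monotone t ∧ ∀ j : Fin k, (j : ℕ) + 1 ≤ t j

private lemma mem_tabSet {n k : ℕ} {t : Fin k → ℕ} :
    t ∈ tabSet n k ↔ (∀ j, t j < n) ∧ Monotone t ∧ ∀ j : Fin k, (j : ℕ) + 1 ≤ t j := by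
  simp [tabSet, Fintype.mem_piFinset]

private lemma tabSet_zero (n k : ℕ) (hk : 1 ≤ k) (hnk : n ≤ k) : tabSet n k = ∅ := by
  ext t
  simp only [mem_tabSet, Finset.notMem_empty, iff_false]
  rintro ⟨h1, _, h3⟩
  let j : Fin k := ⟨k - 1, Nat.sub_lt hk one_pos⟩
  have h4 := h3 j
  have h5 := h1 j
  have : (j : ℕ) = k - 1 := rfl
  omega

private lemma tabSet_nil (n : ℕ) : (tabSet n 0).card = 1 := by
  have : tabSet n 0 = {fun j => j.elim0} := by
    ext t
    simp only [mem_tabSet, Finset.mem_singleton]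
    constructor
    · intro _; funext j; exact j.elim0
    · intro _; exact ⟨fun j => j.elim0, fun a => a.elim0, fun j => j.elim0⟩
  rw [this, Finset.card_singleton]

private lemma tabSet_rec (n k : ℕ) (hk : k + 1 ≤ n) :
    (tabSet (n + 1) (k + 1)).card = (tabSet n (k + 1)).card + (tabSet (n + 1) k).card := by
  classical
  rw [add_comm (#(tabSet n (k + 1))), ← Finset.card_filter_add_card_filter_not
    (p := fun t => t (Fin.last k) = n) (s := tabSet (n + 1) (k + 1))]
  congr 1
  · -- filter (t last = n) has same card as tabSet (n+1) k
    apply Finset.card_bij (fun t _ => Fin.init t)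
    · rintro t ht
      rw [Finset.mem_filter, mem_tabSet] at ht
      obtain ⟨⟨h1, h2, h3⟩, _⟩ := ht
      rw [mem_tabSet]
      refine ⟨fun j => h1 _, fun a b hab => h2 (Fin.castSucc_le_castSucc_iff.mpr hab),
        fun j => ?_⟩
      have := h3 j.castSucc
      simpa [Fin.init] using this
    · rintro t1 ht1 t2 ht2 h
      rw [Finset.mem_filter] at ht1 ht2
      have e1 : t1 = Fin.snoc (Fin.init t1) n := by
        rw [← ht1.2, Fin.snoc_init_self]
      have e2 : t2 = Fin.snoc (Fin.init t2) n := by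
        rw [← ht2.2, Fin.snoc_init_self]
      rw [e1, e2, h]
    · rintro s hs
      rw [mem_tabSet] at hs
      obtain ⟨h1, h2, h3⟩ := hs
      refine ⟨Fin.snoc s n, ?_, by rw [Fin.init_snoc]⟩
      rw [Finset.mem_filter, mem_tabSet]
      have hbd : ∀ j : Fin (k + 1), (Fin.snoc s n : Fin (k + 1) → ℕ) j < n + 1 := by
        intro j
        refine Fin.lastCases ?_ ?_ j
        · rw [Fin.snoc_last]; omega
        · intro i; rw [Fin.snoc_castSucc]; exact h1 i
      have hle : ∀ j : Fin (k + 1), (Fin.snoc s n : Fin (k + 1) → ℕ) j ≤ n := fun j =>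
        Nat.lt_succ_iff.mp (hbd j)
      refine ⟨⟨hbd, ?_, ?_⟩, Fin.snoc_last _ _⟩
      · intro a b hab
        induction b using Fin.lastCases with
        | last => rw [Fin.snoc_last]; exact hle a
        | cast j =>
          induction a using Fin.lastCases with
          | last => exact absurd (lt_of_le_of_lt hab (Fin.castSucc_lt_last j)) (lt_irrefl _)
          | cast i =>
            rw [Fin.snoc_castSucc, Fin.snoc_castSucc]
            exact h2 (Fin.castSucc_le_castSucc_iff.mp hab)
      · intro j
        refine Fin.lastCases ?_ ?_ j
        · rw [Fin.snoc_last]; simpa using hk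
        · intro i; rw [Fin.snoc_castSucc]; simpa using h3 i
  · -- filter (t last ≠ n) = tabSet n (k+1)
    congr 1
    ext t
    rw [Finset.mem_filter, mem_tabSet, mem_tabSet]
    constructor
    · rintro ⟨⟨h1, h2, h3⟩, hne⟩
      refine ⟨fun j => ?_, h2, h3⟩
      have hj : t j ≤ t (Fin.last k) := h2 (Fin.le_last j)
      have := h1 (Fin.last k)
      omega
    · rintro ⟨h1, h2, h3⟩
      exact ⟨⟨fun j => Nat.lt_succ_of_lt (h1 j), h2, h3⟩, fun h => by have := h1 (Fin.last k); omega⟩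

private lemma tabSet_card (n : ℕ) (hn : 1 ≤ n) :
    ∀ k ≤ n, ((tabSet n k).card : ℚ) = (((n : ℚ) - k) / n) * Nat.choose (n + k - 1) k := by
  induction n with
  | zero => omega
  | succ m ih =>
    intro k hk
    induction k with
    | zero =>
      have hm1 : ((m : ℚ) + 1) ≠ 0 := by positivity
      rw [tabSet_nil]
      push_cast
      rw [Nat.choose_zero_right]
      push_cast
      field_simp
      ring
    | succ j ihj =>
      rcases Nat.lt_or_ge j (m : ℕ) with h | h
      · -- j + 1 ≤ m : use the recurrence
        have hm : 1 ≤ m := by omega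
        rw [tabSet_rec m j (by omega)]
        push_cast
        rw [ih hm (j + 1) (by omega), ihj (by omega)]
        have e1 : m + (j + 1) - 1 = m + j := by omega
        have e2 : m + 1 + j - 1 = m + j := by omega
        have e3 : m + 1 + (j + 1) - 1 = m + j + 1 := by omega
        rw [e1, e2, e3]
        have hpas : ((m + j + 1).choose (j + 1) : ℚ)
            = (m + j).choose j + (m + j).choose (j + 1) := by
          exact_mod_cast Nat.choose_succ_succ (m + j) j
        have hab : ((m + j).choose (j + 1) : ℚ) * (j + 1) = ((m + j).choose j : ℚ) * m := by
          have := Nat.choose_succ_right_eq (m + j) j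
          rw [Nat.add_sub_cancel] at this
          exact_mod_cast this
        have hm0 : (m : ℚ) ≠ 0 := by positivity
        have hm1 : ((m : ℚ) + 1) ≠ 0 := by positivity
        rw [hpas]
        push_cast
        field_simp
        ring_nf
        ring_nf at hab
        linear_combination (-1 : ℚ) * hab
      · -- j + 1 = m + 1 : the set is empty
        have hjm : j = m := by omega
        subst hjm
        rw [tabSet_zero (j + 1) (j + 1) (by omega) le_rfl]
        push_cast
        simp

theorem ballot_count_of_row_tableaux (n k : ℕ) (hn : 1 ≤ n) (hk1 : 1 ≤ k)
    (hk2 : k ≤ n - 1) :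
    (Nat.card {t : Fin k → ℕ // Monotone t ∧ (∀ j : Fin k, (j : ℕ) + 1 ≤ t j)
        ∧ (∀ j : Fin k, t j ≤ n - 1)} : ℚ)
      = (((n : ℚ) - k) / n) * Nat.choose (n + k - 1) k := by
  have hcard : Nat.card {t : Fin k → ℕ // Monotone t ∧ (∀ j : Fin k, (j : ℕ) + 1 ≤ t j)
      ∧ (∀ j : Fin k, t j ≤ n - 1)} = (tabSet n k).card := by
    rw [← Nat.card_eq_finsetCard]
    apply Nat.card_congr
    apply Equiv.subtypeEquivRight
    intro t
    rw [mem_tabSet]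
    constructor
    · rintro ⟨h1, h2, h3⟩
      exact ⟨fun j => by have := h3 j; omega, h1, h2⟩
    · rintro ⟨h1, h2, h3⟩
      exact ⟨h2, h3, fun j => by have := h1 j; omega⟩
  rw [hcard]
  exact tabSet_card n hn k (le_trans hk2 (Nat.sub_le n 1))
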